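/- For fixed t1, if t2 ↦ S(t1,t2) = C·(t2-t1) - Σ_a h_a·MI(t1,t2,a) attains a strict local minimum at t2* (with left derivative < 0 < right derivative), then t2* ∈ {e_min(a) : a ∈ A} ∪ {e_max(a) : a ∈ A} ∪ {s_min(a) + e_max(a) - t1 : a ∈ A}. -/

import Mathlib

/-- Minimum intersection of an activity (sMin, sMax, p) with interval [t1,t2]. -/
noncomputable def MI (sMin sMax p t1 t2 : ℝ) : ℝ :=
  max 0 (min (min p (t2 - t1)) (min (sMin + p - t1) (t2 - sMax)))

/-- Left derivative. -/
noncomputable def leftD (f : ℝ → ℝ) (x : ℝ) : ℝ := derivWithin f (Set.Iio x) x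

/-- Right derivative. -/
noncomputable def rightD (f : ℝ → ℝ) (x : ℝ) : ℝ := derivWithin f (Set.Ioi x) x

open Set Filter

lemma MI_eq (sMin sMax p t1 t2 : ℝ) :
    MI sMin sMax p t1 t2
      = max 0 (min (min p (sMin + p - t1)) (t2 - max t1 sMax)) := by
  unfold MI
  congr 1
  rw [min_min_min_comm]
  congr 1
  rcases le_total t1 sMax with hts | hts
  · rw [max_eq_right hts, min_eq_right (by linarith)]
  · rw [max_eq_left hts, min_eq_left (by linarith)]

lemma g_left (c m x : ℝ) :
    HasDerivWithinAt (fun t => max 0 (min c (t - m)))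
      (if m < x ∧ x ≤ m + c then (1:ℝ) else 0) (Set.Iio x) x := by
  split_ifs with hc
  · obtain ⟨h1, h2⟩ := hc
    have base : HasDerivWithinAt (fun t : ℝ => t - m) 1 (Set.Iio x) x := by
      simpa using (hasDerivWithinAt_id x (Set.Iio x)).sub_const m
    refine base.congr_of_eventuallyEq ?_ ?_
    · filter_upwards [mem_nhdsWithin_of_mem_nhds (Ioi_mem_nhds h1),
        self_mem_nhdsWithin] with t ht ht'
      have ht1 : m < t := ht
      have ht2 : t < x := ht'
      rw [min_eq_right (by linarith), max_eq_right (by linarith)]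
    · rw [min_eq_right (by linarith), max_eq_right (by linarith)]
  · push_neg at hc
    rcases le_or_gt x m with hxm | hmx
    · refine (hasDerivWithinAt_const x _ ((0:ℝ))).congr_of_eventuallyEq ?_ ?_
      · filter_upwards [self_mem_nhdsWithin] with t ht
        have ht' : t < x := ht
        have : min c (t - m) ≤ 0 := le_trans (min_le_right _ _) (by linarith)
        rw [max_eq_left this]
      · have : min c (x - m) ≤ 0 := le_trans (min_le_right _ _) (by linarith)
        rw [max_eq_left this]
    · have h2 : m + c < x := hc hmx
      refine (hasDerivWithinAt_const x _ (max 0 c)).congr_of_eventuallyEq ?_ ?_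
      · filter_upwards [mem_nhdsWithin_of_mem_nhds (Ioi_mem_nhds h2)] with t ht
        have ht' : m + c < t := ht
        rw [min_eq_left (by linarith)]
      · rw [min_eq_left (by linarith)]

lemma g_right (c m x : ℝ) :
    HasDerivWithinAt (fun t => max 0 (min c (t - m)))
      (if m ≤ x ∧ x < m + c then (1:ℝ) else 0) (Set.Ioi x) x := by
  split_ifs with hc
  · obtain ⟨h1, h2⟩ := hc
    have base : HasDerivWithinAt (fun t : ℝ => t - m) 1 (Set.Ioi x) x := by
      simpa using (hasDerivWithinAt_id x (Set.Ioi x)).sub_const m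
    refine base.congr_of_eventuallyEq ?_ ?_
    · filter_upwards [mem_nhdsWithin_of_mem_nhds (Iio_mem_nhds h2),
        self_mem_nhdsWithin] with t ht ht'
      have ht1 : t < m + c := ht
      have ht2 : x < t := ht'
      rw [min_eq_right (by linarith), max_eq_right (by linarith)]
    · rw [min_eq_right (by linarith), max_eq_right (by linarith)]
  · push_neg at hc
    rcases lt_or_ge x m with hxm | hmx
    · refine (hasDerivWithinAt_const x _ ((0:ℝ))).congr_of_eventuallyEq ?_ ?_
      · filter_upwards [mem_nhdsWithin_of_mem_nhds (Iio_mem_nhds hxm)] with t ht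
        have ht' : t < m := ht
        have : min c (t - m) ≤ 0 := le_trans (min_le_right _ _) (by linarith)
        rw [max_eq_left this]
      · have : min c (x - m) ≤ 0 := le_trans (min_le_right _ _) (by linarith)
        rw [max_eq_left this]
    · have h2 : m + c ≤ x := hc hmx
      refine (hasDerivWithinAt_const x _ (max 0 c)).congr_of_eventuallyEq ?_ ?_
      · filter_upwards [self_mem_nhdsWithin] with t ht
        have ht' : x < t := ht
        rw [min_eq_left (by linarith)]
      · rw [min_eq_left (by linarith)]

theorem slack_local_min_location {ι : Type*} (A : Finset ι)
    (sMin sMax p h : ι → ℝ) (C t1 : ℝ)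
    (hs : ∀ a ∈ A, sMin a ≤ sMax a) (hp : ∀ a ∈ A, 0 ≤ p a)
    (hh : ∀ a ∈ A, 0 < h a) :
    ∀ t2s : ℝ,
      IsLocalMin (fun t2 => C * (t2 - t1) -
        ∑ a ∈ A, h a * MI (sMin a) (sMax a) (p a) t1 t2) t2s →
      leftD (fun t2 => C * (t2 - t1) -
        ∑ a ∈ A, h a * MI (sMin a) (sMax a) (p a) t1 t2) t2s < 0 →
      0 < rightD (fun t2 => C * (t2 - t1) -
        ∑ a ∈ A, h a * MI (sMin a) (sMax a) (p a) t1 t2) t2s →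
      ∃ a ∈ A,
        t2s = sMin a + p a ∨ t2s = sMax a + p a ∨
        t2s = sMin a + (sMax a + p a) - t1 := by
  intro x hmin hL hR
  classical
  -- rewrite the function
  have fEq : (fun t2 => C * (t2 - t1) -
        ∑ a ∈ A, h a * MI (sMin a) (sMax a) (p a) t1 t2)
      = fun t2 => C * (t2 - t1) - ∑ a ∈ A, h a *
          max 0 (min (min (p a) (sMin a + p a - t1)) (t2 - max t1 (sMax a))) := by
    funext t2
    congr 1
    exact Finset.sum_congr rfl fun a _ => by rw [MI_eq]
  have hlin : ∀ s : Set ℝ, HasDerivWithinAt (fun t2 : ℝ => C * (t2 - t1)) C s x := by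
    intro s
    simpa using ((hasDerivWithinAt_id x s).sub_const t1).const_mul C
  have hDL : HasDerivWithinAt (fun t2 => C * (t2 - t1) -
        ∑ a ∈ A, h a * MI (sMin a) (sMax a) (p a) t1 t2)
      (C - ∑ a ∈ A, h a * (if max t1 (sMax a) < x ∧
          x ≤ max t1 (sMax a) + min (p a) (sMin a + p a - t1) then (1:ℝ) else 0))
      (Set.Iio x) x := by
    rw [fEq]
    exact (hlin _).sub (HasDerivWithinAt.fun_sum fun a _ =>
      (g_left (min (p a) (sMin a + p a - t1)) (max t1 (sMax a)) x).const_mul (h a))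
  have hDR : HasDerivWithinAt (fun t2 => C * (t2 - t1) -
        ∑ a ∈ A, h a * MI (sMin a) (sMax a) (p a) t1 t2)
      (C - ∑ a ∈ A, h a * (if max t1 (sMax a) ≤ x ∧
          x < max t1 (sMax a) + min (p a) (sMin a + p a - t1) then (1:ℝ) else 0))
      (Set.Ioi x) x := by
    rw [fEq]
    exact (hlin _).sub (HasDerivWithinAt.fun_sum fun a _ =>
      (g_right (min (p a) (sMin a + p a - t1)) (max t1 (sMax a)) x).const_mul (h a))
  rw [leftD, hDL.derivWithin (uniqueDiffWithinAt_Iio x)] at hL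
  rw [rightD, hDR.derivWithin (uniqueDiffWithinAt_Ioi x)] at hR
  have key : ∃ a ∈ A,
      (if max t1 (sMax a) ≤ x ∧
          x < max t1 (sMax a) + min (p a) (sMin a + p a - t1) then (1:ℝ) else 0)
      < (if max t1 (sMax a) < x ∧
          x ≤ max t1 (sMax a) + min (p a) (sMin a + p a - t1) then (1:ℝ) else 0) := by
    by_contra hcon
    push_neg at hcon
    have : (∑ a ∈ A, h a * (if max t1 (sMax a) < x ∧
          x ≤ max t1 (sMax a) + min (p a) (sMin a + p a - t1) then (1:ℝ) else 0))
        ≤ ∑ a ∈ A, h a * (if max t1 (sMax a) ≤ x ∧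
          x < max t1 (sMax a) + min (p a) (sMin a + p a - t1) then (1:ℝ) else 0) :=
      Finset.sum_le_sum fun a ha =>
        mul_le_mul_of_nonneg_left (hcon a ha) (hh a ha).le
    linarith
  obtain ⟨a, ha, hlt⟩ := key
  refine ⟨a, ha, ?_⟩
  have hL1 : max t1 (sMax a) < x ∧
      x ≤ max t1 (sMax a) + min (p a) (sMin a + p a - t1) := by
    by_contra hnc
    rw [if_neg hnc] at hlt
    have : (0:ℝ) ≤ if max t1 (sMax a) ≤ x ∧
        x < max t1 (sMax a) + min (p a) (sMin a + p a - t1) then (1:ℝ) else 0 := by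
      split_ifs <;> norm_num
    linarith
  have hR0 : ¬(max t1 (sMax a) ≤ x ∧
      x < max t1 (sMax a) + min (p a) (sMin a + p a - t1)) := by
    intro hc
    rw [if_pos hc, if_pos hL1] at hlt
    exact lt_irrefl _ hlt
  obtain ⟨hm, hmc⟩ := hL1
  have hx : x = max t1 (sMax a) + min (p a) (sMin a + p a - t1) := by
    rcases lt_or_ge x (max t1 (sMax a) + min (p a) (sMin a + p a - t1)) with hlt' | hge
    · exact absurd ⟨hm.le, hlt'⟩ hR0
    · linarith
  rcases le_total t1 (sMin a) with hts | hts
  · have hc : min (p a) (sMin a + p a - t1) = p a := min_eq_left (by linarith)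
    have hmm : max t1 (sMax a) = sMax a := max_eq_right (le_trans hts (hs a ha))
    right; left
    rw [hx, hc, hmm]
  · have hc : min (p a) (sMin a + p a - t1) = sMin a + p a - t1 :=
      min_eq_right (by linarith)
    rcases le_total t1 (sMax a) with hts' | hts'
    · have hmm : max t1 (sMax a) = sMax a := max_eq_right hts'
      right; right
      rw [hx, hc, hmm]; ring
    · have hmm : max t1 (sMax a) = t1 := max_eq_left hts'
      left
      rw [hx, hc, hmm]; ring
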